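/- Let R be a ring, let A and B be right R-modules which are both uniform, and put M = A ⊕ B. Then every nonzero proper direct summand X of M is uniform. -/
import Mathlib


/-- A submodule `N` of `M` is *small* (superfluous) in `M` if `N + X ≠ M`
for every proper submodule `X` of `M`. -/
def IsSmallSubmodule {R M : Type*} [Ring R] [AddCommGroup M] [Module R M]
    (N : Submodule R M) : Prop :=
  ∀ X : Submodule R M, X ≠ ⊤ → N ⊔ X ≠ ⊤

/-- A nonzero module `M` is *hollow* if every proper submodule of `M` is small in `M`. -/
def IsHollowModule (R M : Type*) [Ring R] [AddCommGroup M] [Module R M] : Prop :=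
  Nontrivial M ∧ ∀ N : Submodule R M, N ≠ ⊤ → IsSmallSubmodule N

/-- A submodule `N` of `M` is *essential* in `M` if `N ∩ X ≠ 0`
for every nonzero submodule `X` of `M`. -/
def IsEssentialSubmodule {R M : Type*} [Ring R] [AddCommGroup M] [Module R M]
    (N : Submodule R M) : Prop :=
  ∀ X : Submodule R M, X ≠ ⊥ → N ⊓ X ≠ ⊥

/-- A nonzero module `M` is *uniform* if every nonzero submodule of `M` is essential in `M`. -/
def IsUniformModule (R M : Type*) [Ring R] [AddCommGroup M] [Module R M] : Prop :=
  Nontrivial M ∧ ∀ N : Submodule R M, N ≠ ⊥ → IsEssentialSubmodule N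

/-- `X` is a direct summand of `M`. -/
def IsDirectSummand {R M : Type*} [Ring R] [AddCommGroup M] [Module R M]
    (X : Submodule R M) : Prop :=
  ∃ Y : Submodule R M, IsCompl X Y

/-- A module `M` is *lifting* if for every submodule `N` of `M` there is a direct summand
`X` of `M` with `X ⊆ N` such that `N/X` is small in `M/X`. -/
def IsLiftingModule (R M : Type*) [Ring R] [AddCommGroup M] [Module R M] : Prop :=
  ∀ N : Submodule R M, ∃ X : Submodule R M,
    X ≤ N ∧ IsDirectSummand X ∧ IsSmallSubmodule (N.map X.mkQ)

/-- A module `M` is *extending* if for every submodule `N` of `M` there is a direct summand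
`X` of `M` such that `N` is essential in `X`. -/
def IsExtendingModule (R M : Type*) [Ring R] [AddCommGroup M] [Module R M] : Prop :=
  ∀ N : Submodule R M, ∃ X : Submodule R M,
    IsDirectSummand X ∧ N ≤ X ∧ ∀ Y : Submodule R M, Y ≤ X → Y ≠ ⊥ → N ⊓ Y ≠ ⊥

/-- A module is *uniserial* if its submodules are linearly ordered by inclusion. -/
def IsUniserialModule (R M : Type*) [Ring R] [AddCommGroup M] [Module R M] : Prop :=
  ∀ A B : Submodule R M, A ≤ B ∨ B ≤ A

/-- An internal finite direct sum decomposition `M = ⨁ᵢ Fᵢ`. -/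
def IsInternalDirectSum {R M ι : Type*} [Ring R] [AddCommGroup M] [Module R M]
    (F : ι → Submodule R M) : Prop :=
  (⨆ i, F i) = ⊤ ∧ ∀ i, Disjoint (F i) (⨆ j ∈ ({i}ᶜ : Set ι), F j)

/-- A module `M` satisfies the *finite internal exchange property* if for any direct
summand `X` of `M` and any finite direct sum decomposition `M = M₁ ⊕ ⋯ ⊕ Mₙ` there are
submodules `Mᵢ' ⊆ Mᵢ` with `M = X ⊕ M₁' ⊕ ⋯ ⊕ Mₙ'`. -/
def SatisfiesFIEP (R M : Type*) [Ring R] [AddCommGroup M] [Module R M] : Prop :=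
  ∀ (X : Submodule R M), IsDirectSummand X →
    ∀ (n : ℕ) (Mi : Fin n → Submodule R M), IsInternalDirectSum Mi →
      ∃ Mi' : Fin n → Submodule R M, (∀ i, Mi' i ≤ Mi i) ∧
        IsInternalDirectSum (fun o : Option (Fin n) => o.elim X Mi')

section AuxLemmas

variable {R A B : Type*} [Ring R] [AddCommGroup A] [AddCommGroup B]
    [Module R A] [Module R B]

lemma auxA (hA : IsUniformModule R A) (S T : Submodule R (A × B))
    (hS : ∃ a : A, a ≠ 0 ∧ ((a, 0) : A × B) ∈ S)
    (hT : ∃ a : A, a ≠ 0 ∧ ((a, 0) : A × B) ∈ T) :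
    ∃ a : A, a ≠ 0 ∧ ((a, 0) : A × B) ∈ S ∧ ((a, 0) : A × B) ∈ T := by
  obtain ⟨a, ha, haS⟩ := hS
  obtain ⟨b, hb, hbT⟩ := hT
  set S' := S.comap (LinearMap.inl R A B) with hS'def
  set T' := T.comap (LinearMap.inl R A B) with hT'def
  have hS' : S' ≠ ⊥ := by
    rw [Submodule.ne_bot_iff]
    exact ⟨a, by simpa [hS'def, Submodule.mem_comap] using haS, ha⟩
  have hT' : T' ≠ ⊥ := by
    rw [Submodule.ne_bot_iff]
    exact ⟨b, by simpa [hT'def, Submodule.mem_comap] using hbT, hb⟩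
  have h := hA.2 S' hS' T' hT'
  rw [Submodule.ne_bot_iff] at h
  obtain ⟨c, hc, hc0⟩ := h
  rw [Submodule.mem_inf] at hc
  refine ⟨c, hc0, ?_, ?_⟩
  · simpa [hS'def, Submodule.mem_comap] using hc.1
  · simpa [hT'def, Submodule.mem_comap] using hc.2

lemma auxB (hB : IsUniformModule R B) (P Q : Submodule R (A × B))
    (hP0 : P ≠ ⊥) (hQ0 : Q ≠ ⊥)
    (hPA : ∀ x ∈ P, x.2 = 0 → x = 0) (hQA : ∀ x ∈ Q, x.2 = 0 → x = 0)
    (hPQ : ∀ x, x ∈ P → x ∈ Q → x = 0) :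
    ∃ p q, p ∈ P ∧ q ∈ Q ∧ p - q ≠ 0 ∧ (p - q).2 = 0 := by
  rw [Submodule.ne_bot_iff] at hP0 hQ0
  obtain ⟨p0, hp0, hp00⟩ := hP0
  obtain ⟨q0, hq0, hq00⟩ := hQ0
  have hPm : P.map (LinearMap.snd R A B) ≠ ⊥ := by
    rw [Submodule.ne_bot_iff]
    exact ⟨p0.2, ⟨p0, hp0, rfl⟩, fun h => hp00 (hPA p0 hp0 h)⟩
  have hQm : Q.map (LinearMap.snd R A B) ≠ ⊥ := by
    rw [Submodule.ne_bot_iff]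
    exact ⟨q0.2, ⟨q0, hq0, rfl⟩, fun h => hq00 (hQA q0 hq0 h)⟩
  have h := hB.2 _ hPm _ hQm
  rw [Submodule.ne_bot_iff] at h
  obtain ⟨b, hb, hb0⟩ := h
  rw [Submodule.mem_inf] at hb
  obtain ⟨p, hp, hpb⟩ := hb.1
  obtain ⟨q, hq, hqb⟩ := hb.2
  refine ⟨p, q, hp, hq, ?_, ?_⟩
  · intro h
    have : p = q := by rwa [sub_eq_zero] at h
    subst this
    exact hb0 (by rw [← hpb]; rw [hPQ p hp hq]; rfl)
  · simp only [LinearMap.snd_apply] at hpb hqb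
    show p.2 - q.2 = 0
    rw [hpb, hqb, sub_self]

lemma keyLemma (hA : IsUniformModule R A) (hB : IsUniformModule R B)
    (U V W : Submodule R (A × B)) (hU0 : U ≠ ⊥) (hV0 : V ≠ ⊥) (hW0 : W ≠ ⊥)
    (hInd : ∀ u ∈ U, ∀ v ∈ V, ∀ w ∈ W, u + v + w = 0 → u = 0 ∧ v = 0 ∧ w = 0)
    (hU : ∀ x ∈ U, x.2 = 0 → x = 0) (hV : ∀ x ∈ V, x.2 = 0 → x = 0) : False := by
  have hUV : ∀ x, x ∈ U → x ∈ V → x = 0 := fun x hx hy =>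
    (hInd x hx (-x) (neg_mem hy) 0 (zero_mem _) (by abel)).1
  have hUW : ∀ x, x ∈ U → x ∈ W → x = 0 := fun x hx hy =>
    (hInd x hx 0 (zero_mem _) (-x) (neg_mem hy) (by abel)).1
  obtain ⟨p, q, hp, hq, hd, hd2⟩ := auxB hB U V hU0 hV0 hU hV hUV
  have hdUV : ∃ a : A, a ≠ 0 ∧ ((a, 0) : A × B) ∈ U ⊔ V := by
    refine ⟨(p - q).1, fun h => hd (Prod.ext h hd2), ?_⟩
    have : ((p - q).1, (0 : B)) = p - q := by rw [← hd2]
    rw [this, sub_eq_add_neg]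
    exact Submodule.add_mem_sup hp (neg_mem hq)
  by_cases hmW : ∃ a : A, a ≠ 0 ∧ ((a, 0) : A × B) ∈ W
  · obtain ⟨a, ha, h1, h2⟩ := auxA hA (U ⊔ V) W hdUV hmW
    rw [Submodule.mem_sup] at h1
    obtain ⟨u, hu, v, hv, huv⟩ := h1
    have h3 := hInd u hu v hv (-(a, 0)) (neg_mem h2) (by rw [add_neg_eq_zero]; exact huv)
    apply ha
    have : ((a, 0) : A × B) = 0 := by rw [← huv, h3.1, h3.2.1, add_zero]
    exact congrArg Prod.fst this
  · push_neg at hmW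
    have hW : ∀ x ∈ W, x.2 = 0 → x = 0 := by
      intro x hx h2
      by_contra hx0
      have h1 : x.1 ≠ 0 := fun h => hx0 (Prod.ext h h2)
      have : ((x.1, 0) : A × B) = x := by rw [← h2]
      exact (hmW x.1 h1) (by rwa [this])
    obtain ⟨p', q', hp', hq', hd', hd2'⟩ := auxB hB U W hU0 hW0 hU hW hUW
    have hdUW : ∃ a : A, a ≠ 0 ∧ ((a, 0) : A × B) ∈ U ⊔ W := by
      refine ⟨(p' - q').1, fun h => hd' (Prod.ext h hd2'), ?_⟩
      have : ((p' - q').1, (0 : B)) = p' - q' := by rw [← hd2']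
      rw [this, sub_eq_add_neg]
      exact Submodule.add_mem_sup hp' (neg_mem hq')
    obtain ⟨a, ha, h1, h2⟩ := auxA hA (U ⊔ V) (U ⊔ W) hdUV hdUW
    rw [Submodule.mem_sup] at h1 h2
    obtain ⟨u1, hu1, v, hv, h1⟩ := h1
    obtain ⟨u2, hu2, w, hw, h2⟩ := h2
    have heq : (u1 - u2) + v + (-w) = 0 := by
      have h12 : u1 + v = u2 + w := h1.trans h2.symm
      have := sub_eq_zero.mpr h12
      rw [← this]; abel
    obtain ⟨h3, h4, h5⟩ := hInd _ (sub_mem hu1 hu2) v hv (-w) (neg_mem hw) heq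
    have hau1 : ((a, 0) : A × B) = u1 := by rw [← h1, h4, add_zero]
    have : u1 = 0 := hU u1 hu1 (by rw [← hau1])
    exact ha (congrArg Prod.fst (hau1.trans this))

end AuxLemmas

/-- If `A` and `B` are uniform right `R`-modules and `M = A ⊕ B`, then every nonzero proper
direct summand `X` of `M` is uniform. -/
theorem stmt_1 {R A B : Type*} [Ring R] [AddCommGroup A] [AddCommGroup B]
    [Module R A] [Module R B]
    (hA : IsUniformModule R A) (hB : IsUniformModule R B)
    (X : Submodule R (A × B)) (hX0 : X ≠ ⊥) (hXT : X ≠ ⊤) (hXds : IsDirectSummand X) :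
    IsUniformModule R ↥X := by
  obtain ⟨Y, hY⟩ := hXds
  have hXY : ∀ x : A × B, x ∈ X → x ∈ Y → x = 0 := by
    intro x hx hy
    have hd := hY.disjoint
    rw [Submodule.disjoint_def] at hd
    exact hd x hx hy
  have hY0 : Y ≠ ⊥ := by
    intro h
    apply hXT
    have := hY.codisjoint.eq_top
    rwa [h, sup_bot_eq] at this
  constructor
  · exact Submodule.nontrivial_iff_ne_bot.mpr hX0
  · intro N hN X' hX' hcon
    set U := N.map X.subtype with hUdef
    set V := X'.map X.subtype with hVdef
    have hU0 : U ≠ ⊥ := by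
      rw [Submodule.ne_bot_iff] at hN ⊢
      obtain ⟨n, hn, hn0⟩ := hN
      exact ⟨↑n, ⟨n, hn, rfl⟩, by simpa using hn0⟩
    have hV0 : V ≠ ⊥ := by
      rw [Submodule.ne_bot_iff] at hX' ⊢
      obtain ⟨n, hn, hn0⟩ := hX'
      exact ⟨↑n, ⟨n, hn, rfl⟩, by simpa using hn0⟩
    have hUX : U ≤ X := Submodule.map_subtype_le X N
    have hVX : V ≤ X := Submodule.map_subtype_le X X'
    have hUVz : ∀ x : A × B, x ∈ U → x ∈ V → x = 0 := by
      intro x hx hy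
      obtain ⟨n, hn, hnx⟩ := hx
      obtain ⟨m, hm, hmx⟩ := hy
      have hnm : n = m := Subtype.ext (hnx.trans hmx.symm)
      have hmem : n ∈ N ⊓ X' := ⟨hn, by rw [hnm]; exact hm⟩
      rw [hcon] at hmem
      rw [← hnx, hmem]; rfl
    have hUYz : ∀ x : A × B, x ∈ U → x ∈ Y → x = 0 := fun x hx hy => hXY x (hUX hx) hy
    have hVYz : ∀ x : A × B, x ∈ V → x ∈ Y → x = 0 := fun x hx hy => hXY x (hVX hx) hy
    have hInd : ∀ u ∈ U, ∀ v ∈ V, ∀ w ∈ Y, u + v + w = 0 → u = 0 ∧ v = 0 ∧ w = 0 := by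
      intro u hu v hv w hw h
      have hw0 : w = 0 := by
        have hwe : w = -(u + v) := by
          rw [eq_neg_iff_add_eq_zero, ← h]; abel
        refine hXY w ?_ hw
        rw [hwe]; exact neg_mem (add_mem (hUX hu) (hVX hv))
      have huv : u = -v := by
        rw [hw0, add_zero] at h
        rwa [add_eq_zero_iff_eq_neg] at h
      have hu0 : u = 0 := hUVz u hu (by rw [huv]; exact neg_mem hv)
      refine ⟨hu0, ?_, hw0⟩
      rw [hu0] at huv
      rw [← neg_eq_zero, ← huv]
    have hIndUYV : ∀ u ∈ U, ∀ w ∈ Y, ∀ v ∈ V, u + w + v = 0 → u = 0 ∧ w = 0 ∧ v = 0 := by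
      intro u hu w hw v hv h
      obtain ⟨a, b, c⟩ := hInd u hu v hv w hw (by rw [← h]; abel)
      exact ⟨a, c, b⟩
    have hIndVYU : ∀ v ∈ V, ∀ w ∈ Y, ∀ u ∈ U, v + w + u = 0 → v = 0 ∧ w = 0 ∧ u = 0 := by
      intro v hv w hw u hu h
      obtain ⟨a, b, c⟩ := hInd u hu v hv w hw (by rw [← h]; abel)
      exact ⟨b, c, a⟩
    have conv : ∀ S : Submodule R (A × B), ¬(∃ a : A, a ≠ 0 ∧ ((a, 0) : A × B) ∈ S) →
        ∀ x ∈ S, x.2 = 0 → x = 0 := by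
      intro S hS x hx h2
      by_contra hx0
      have h1 : x.1 ≠ 0 := fun h => hx0 (Prod.ext h h2)
      apply hS
      refine ⟨x.1, h1, ?_⟩
      have hxe : ((x.1, 0) : A × B) = x := by rw [← h2]
      rwa [hxe]
    have pair : ∀ S T : Submodule R (A × B), (∀ x : A × B, x ∈ S → x ∈ T → x = 0) →
        (∃ a : A, a ≠ 0 ∧ ((a, 0) : A × B) ∈ S) →
        (∃ a : A, a ≠ 0 ∧ ((a, 0) : A × B) ∈ T) → False := by
      intro S T hz h1 h2
      obtain ⟨a, ha, haS, haT⟩ := auxA hA S T h1 h2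
      exact ha (congrArg Prod.fst (hz _ haS haT))
    by_cases hmU : ∃ a : A, a ≠ 0 ∧ ((a, 0) : A × B) ∈ U
    · by_cases hmV : ∃ a : A, a ≠ 0 ∧ ((a, 0) : A × B) ∈ V
      · exact pair U V hUVz hmU hmV
      · by_cases hmY : ∃ a : A, a ≠ 0 ∧ ((a, 0) : A × B) ∈ Y
        · exact pair U Y hUYz hmU hmY
        · exact keyLemma hA hB V Y U hV0 hY0 hU0 hIndVYU (conv V hmV) (conv Y hmY)
    · by_cases hmV : ∃ a : A, a ≠ 0 ∧ ((a, 0) : A × B) ∈ V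
      · by_cases hmY : ∃ a : A, a ≠ 0 ∧ ((a, 0) : A × B) ∈ Y
        · exact pair V Y hVYz hmV hmY
        · exact keyLemma hA hB U Y V hU0 hY0 hV0 hIndUYV (conv U hmU) (conv Y hmY)
      · exact keyLemma hA hB U V Y hU0 hV0 hY0 hInd (conv U hmU) (conv V hmV)
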